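/- For all reals x ≥ 100 and h with 0 < h ≤ (5/6)·x, the inequality |log(x+h) - 2·log x + log(x-h)| ≤ 12·h²/x² holds. -/

import Mathlib

theorem log_second_diff_bound (x h : ℝ) (hx : 100 ≤ x) (hh : 0 < h) (hhx : h ≤ 5 / 6 * x) :
    |Real.log (x + h) - 2 * Real.log x + Real.log (x - h)| ≤ 12 * h ^ 2 / x ^ 2 := by
  have hx0 : (0:ℝ) < x := by linarith
  have hxh : (0:ℝ) < x - h := by linarith
  have hxph : (0:ℝ) < x + h := by linarith
  set t : ℝ := h ^ 2 / x ^ 2 with ht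
  have ht0 : 0 < t := by positivity
  have ht1 : t ≤ 25 / 36 := by
    rw [ht, div_le_iff₀ (by positivity)]
    nlinarith
  have h1t : (0:ℝ) < 1 - t := by linarith
  have key : Real.log (x + h) - 2 * Real.log x + Real.log (x - h) = Real.log (1 - t) := by
    have e1 : Real.log (x + h) + Real.log (x - h) = Real.log ((x + h) * (x - h)) :=
      (Real.log_mul (ne_of_gt hxph) (ne_of_gt hxh)).symm
    have e2 : 2 * Real.log x = Real.log (x ^ 2) := by
      rw [Real.log_pow]; push_cast; ring
    have e3 : (1 : ℝ) - t = (x + h) * (x - h) / x ^ 2 := by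
      rw [ht]; field_simp; ring
    rw [e3, Real.log_div (by positivity) (by positivity)]
    linarith [e1, e2]
  rw [key]
  have hlog_neg : Real.log (1 - t) ≤ 0 := Real.log_nonpos (by linarith) (by linarith)
  rw [abs_of_nonpos hlog_neg]
  have hb : Real.log (1 - t)⁻¹ ≤ (1 - t)⁻¹ - 1 :=
    Real.log_le_sub_one_of_pos (by positivity)
  rw [Real.log_inv] at hb
  have h2 : (1 - t)⁻¹ - 1 = t / (1 - t) := by field_simp; ring
  have h3 : t / (1 - t) ≤ 12 * t := by
    rw [div_le_iff₀ h1t]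
    nlinarith
  have : 12 * h ^ 2 / x ^ 2 = 12 * t := by rw [ht]; ring
  linarith
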